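/- arXiv:0801.0033 — 2 statements merged into one kernel-verified Lean document; each statement's English description precedes it below -/
import Mathlib

section
/- Let C be a category with coequalizers, let (R, r, ρ) and (T, t, τ) be monads on C with T preserving coequalizers, and let φ : R → T be a morphism of monads. Then the restriction functor φ* : T-Mod → R-Mod (given by (X, x) ↦ (X, x ∘ φX)) has a left adjoint φ*, where φ*(X, x) is the coequalizer in T-Mod of the parallel pair (tX ∘ TφX, Tx) : TRX ⇉ TX. -/
open CategoryTheory CategoryTheory.Limits

universe v u

section Aux

variable {C : Type u} [Category.{v} C] [HasCoequalizers C] (R T : Monad C)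
  [PreservesColimitsOfShape WalkingParallelPair (T : C ⥤ C)] (φ : R ⟶ T)

instance stmt3_hasCoeq : HasCoequalizers T.Algebra := by
  constructor
  intro F
  have : HasColimit (F ⋙ Monad.forget T) :=
    hasColimit_of_iso (diagramIsoParallelPair _)
  exact Monad.forget_creates_colimits_of_monad_preserves F

/-- The first leg of the parallel pair. -/
noncomputable def stmt3F₁ (X : R.Algebra) :
    (Monad.free T).obj (R.obj X.A) ⟶ (Monad.free T).obj X.A :=
  (Monad.free T).map (φ.app X.A) ≫ (Monad.adj T).counit.app ((Monad.free T).obj X.A)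

/-- The second leg of the parallel pair. -/
noncomputable def stmt3F₂ (_φ : R ⟶ T) (X : R.Algebra) :
    (Monad.free T).obj (R.obj X.A) ⟶ (Monad.free T).obj X.A :=
  (Monad.free T).map X.a

lemma stmt3F₁_f (X : R.Algebra) :
    (stmt3F₁ R T φ X).f = (T : C ⥤ C).map (φ.app X.A) ≫ T.μ.app X.A := by
  simp [stmt3F₁]
  rfl

lemma stmt3F₂_f (X : R.Algebra) :
    (stmt3F₂ R T φ X).f = (T : C ⥤ C).map X.a := rfl

/-- The object part of the left adjoint. -/
noncomputable def stmt3Obj (X : R.Algebra) : T.Algebra :=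
  coequalizer (stmt3F₁ R T φ X) (stmt3F₂ R T φ X)

lemma stmt3L1 (X : R.Algebra) (Y : T.Algebra) (p : (T : C ⥤ C).obj X.A ⟶ Y.A)
    (hp : (T : C ⥤ C).map p ≫ Y.a = T.μ.app X.A ≫ p)
    (hc : ((T : C ⥤ C).map (φ.app X.A) ≫ T.μ.app X.A) ≫ p = (T : C ⥤ C).map X.a ≫ p) :
    R.map (T.η.app X.A ≫ p) ≫ φ.app Y.A ≫ Y.a = X.a ≫ T.η.app X.A ≫ p := by
  have hnat : R.map (T.η.app X.A ≫ p) ≫ φ.app Y.A =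
      φ.app X.A ≫ (T : C ⥤ C).map (T.η.app X.A ≫ p) := φ.toNatTrans.naturality _
  rw [reassoc_of% hnat, Functor.map_comp, Category.assoc, hp, ← Category.assoc (T.map _),
    Monad.right_unit]
  erw [Category.id_comp]
  have e1 : X.a ≫ T.η.app X.A = T.η.app _ ≫ (T : C ⥤ C).map X.a := T.η.naturality X.a
  have e2 : φ.app X.A ≫ T.η.app ((T : C ⥤ C).obj X.A) =
      T.η.app _ ≫ (T : C ⥤ C).map (φ.app X.A) := T.η.naturality _
  rw [reassoc_of% e1, ← hc]
  simp only [Category.assoc]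
  rw [← reassoc_of% e2]
  simp

lemma stmt3L2 (X : R.Algebra) (Y : T.Algebra) (g : X.A ⟶ Y.A)
    (hg : R.map g ≫ φ.app Y.A ≫ Y.a = X.a ≫ g) :
    ((T : C ⥤ C).map (φ.app X.A) ≫ T.μ.app X.A) ≫ (T : C ⥤ C).map g ≫ Y.a =
      (T : C ⥤ C).map X.a ≫ (T : C ⥤ C).map g ≫ Y.a := by
  have hφ : R.map g ≫ φ.app Y.A = φ.app X.A ≫ (T : C ⥤ C).map g :=
    φ.toNatTrans.naturality _
  rw [← Category.assoc, hφ, Category.assoc] at hg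
  rw [Category.assoc, ← T.μ.naturality_assoc, Functor.comp_map, Y.assoc,
    ← Functor.map_comp_assoc, ← Functor.map_comp_assoc, ← Functor.map_comp_assoc, Category.assoc, hg]

lemma stmt3L3 (X : C) (Y : T.Algebra) (p : (T : C ⥤ C).obj X ⟶ Y.A)
    (hp : (T : C ⥤ C).map p ≫ Y.a = T.μ.app X ≫ p) :
    (T : C ⥤ C).map (T.η.app X ≫ p) ≫ Y.a = p := by
  rw [Functor.map_comp, Category.assoc, hp, ← Category.assoc, Monad.right_unit,
    Category.id_comp]

lemma stmt3L4 (X : C) (Y : T.Algebra) (g : X ⟶ Y.A) :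
    T.η.app X ≫ (T : C ⥤ C).map g ≫ Y.a = g := by
  rw [← T.η.naturality_assoc]
  rw [Functor.id_map, Monad.Algebra.unit]
  exact Category.comp_id g

lemma stmt3L5 {X₁ X₂ X₃ X₄ X₅ : C} (a : X₁ ⟶ X₂) (b : X₂ ⟶ X₃) (c : X₃ ⟶ X₄) (d : X₄ ⟶ X₅) :
    a ≫ b ≫ c ≫ d = (a ≫ b ≫ c) ≫ d := by
  simp

/-- Transpose along the coequalizer + free-forgetful adjunction. -/
noncomputable def stmt3Equiv (X : R.Algebra) (Y : T.Algebra) :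
    (stmt3Obj R T φ X ⟶ Y) ≃ (X ⟶ (Monad.algebraFunctorOfMonadHom φ).obj Y) where
  toFun u :=
    { f := T.η.app X.A ≫ (coequalizer.π _ _ ≫ u).f
      h := by
        have hc : (stmt3F₁ R T φ X ≫ (coequalizer.π _ _ ≫ u)).f =
            (stmt3F₂ R T φ X ≫ (coequalizer.π _ _ ≫ u)).f :=
          congrArg Monad.Algebra.Hom.f (coequalizer.condition_assoc _ _ u)
        exact stmt3L1 R T φ X Y _ (coequalizer.π _ _ ≫ u).h
          (by rw [← stmt3F₁_f R T φ X]; exact hc) }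
  invFun g :=
    coequalizer.desc ((Monad.free T).map g.f ≫ (Monad.adj T).counit.app Y) (by
      ext
      have := stmt3L2 R T φ X Y g.f g.h
      rw [← stmt3F₁_f R T φ X] at this
      simp only [Monad.adj_counit]
      exact this)
  left_inv u := by
    apply coequalizer.hom_ext
    rw [coequalizer.π_desc]
    ext
    simp only [Monad.adj_counit]
    exact stmt3L3 T X.A Y _ (coequalizer.π (stmt3F₁ R T φ X) (stmt3F₂ R T φ X) ≫ u).h
  right_inv g := by
    ext
    dsimp
    rw [← Monad.Algebra.comp_f, coequalizer.π_desc]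
    simp only [Monad.Algebra.comp_f, Monad.free_map_f, Monad.adj_counit]
    show T.η.app X.A ≫ (T : C ⥤ C).map g.f ≫ Y.a = g.f
    exact stmt3L4 T X.A Y g.f

end Aux

/-- Let `C` have coequalizers, let `R`, `T` be monads on `C` with `T`
preserving coequalizers, and let `φ : R ⟶ T` be a morphism of monads.  Then the
restriction functor `φ* : T-Mod ⥤ R-Mod` (sending `(X, x)` to `(X, x ∘ φX)`, which is
`Monad.algebraFunctorOfMonadHom φ`) has a left adjoint `φ⁎`, whose value on an
`R`-module `X` is the coequalizer in `T-Mod` of the parallel pair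
`(tX ∘ TφX, Tx) : TRX ⇉ TX` (of morphisms of free `T`-modules). -/
theorem stmt3 {C : Type u} [Category.{v} C] [HasCoequalizers C] (R T : Monad C)
    [PreservesColimitsOfShape WalkingParallelPair (T : C ⥤ C)] (φ : R ⟶ T) :
    ∃ L : R.Algebra ⥤ T.Algebra,
      Nonempty (L ⊣ Monad.algebraFunctorOfMonadHom φ) ∧
      ∀ X : R.Algebra,
        ∃ (π : (Monad.free T).obj X.A ⟶ L.obj X)
          (w : ((Monad.free T).map (φ.app X.A) ≫
              (Monad.adj T).counit.app ((Monad.free T).obj X.A)) ≫ π =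
            (Monad.free T).map X.a ≫ π),
          Nonempty (IsColimit (Cofork.ofπ π w)) := by
  refine ⟨Adjunction.leftAdjointOfEquiv (stmt3Equiv R T φ) ?_,
    ⟨Adjunction.adjunctionOfEquivLeft _ _⟩, fun X => ?_⟩
  · intro X Y Y' u h
    ext
    simp [stmt3Equiv]
    exact stmt3L5 _ _ _ _
  · exact ⟨coequalizer.π (stmt3F₁ R T φ X) (stmt3F₂ R T φ X),
      coequalizer.condition _ _, ⟨coequalizerIsCoequalizer _ _⟩⟩
end

section
/- Let (M, C, T_o, T_i, Π, t, i) be an admissible septuple and (X, w) a transposition morphism for it. Then the cosimplex Z^n := Π T_o^{n+1} X (with cofaces T_o^k η_o T_o^{n-k} X and codegeneracies T_o^k μ_o T_o^{n-k} X applied under Π) is para-cocyclic, with para-cocyclic morphism w_n = Π T_o^n w ∘ Π T_o^{n-1} t X ∘ ⋯ ∘ Π t T_o^{n-1} X ∘ i T_o^n X. -/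
open CategoryTheory CategoryTheory.Limits

universe v u v₂ u₂ v₃ u₃

variable {C : Type u} [Category.{v} C]

/-- A distributive law `t : T_i T_o ⟶ T_o T_i` between two monads on `C` (the outer
monad of the domain is the first argument): a natural transformation with components
`T_i(T_o X) ⟶ T_o(T_i X)` satisfying the four Beck axioms. -/
structure DistLaw (R T : Monad C) where
  hom : (T : C ⥤ C) ⋙ (R : C ⥤ C) ⟶ (R : C ⥤ C) ⋙ (T : C ⥤ C)
  mul_left : ∀ X : C,
    R.μ.app ((T : C ⥤ C).obj X) ≫ hom.app X =
      (R : C ⥤ C).map (hom.app X) ≫ hom.app ((R : C ⥤ C).obj X) ≫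
        (T : C ⥤ C).map (R.μ.app X)
  mul_right : ∀ X : C,
    (R : C ⥤ C).map (T.μ.app X) ≫ hom.app X =
      hom.app ((T : C ⥤ C).obj X) ≫ (T : C ⥤ C).map (hom.app X) ≫
        T.μ.app ((R : C ⥤ C).obj X)
  unit_left : ∀ X : C,
    R.η.app ((T : C ⥤ C).obj X) ≫ hom.app X = (T : C ⥤ C).map (R.η.app X)
  unit_right : ∀ X : C,
    (R : C ⥤ C).map (T.η.app X) ≫ hom.app X = T.η.app ((R : C ⥤ C).obj X)

variable {M : Type u₂} [Category.{v₂} M] {D : Type u₃} [Category.{v₃} D]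

/-- Iterated composition power `T_o^n` of (the functor underlying) a monad. -/
def Tpow (To : Monad M) : ℕ → (M ⥤ M)
  | 0 => 𝟭 M
  | n + 1 => Tpow To n ⋙ (To : M ⥤ M)

/-- The coface `T_o^k η_o T_o^{n-k} : T_o^n ⟶ T_o^{n+1}`. -/
def coface (To : Monad M) : (n k : ℕ) → (Tpow To n ⟶ Tpow To (n + 1))
  | 0, _ =>
    { app := fun X => To.η.app X
      naturality := fun _ _ f => To.η.naturality f }
  | n + 1, 0 =>
    { app := fun X => To.η.app ((Tpow To (n + 1)).obj X)
      naturality := fun _ _ f => To.η.naturality ((Tpow To (n + 1)).map f) }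
  | n + 1, k + 1 => Functor.whiskerRight (coface To n k) (To : M ⥤ M)

/-- The codegeneracy `T_o^k μ_o T_o^{n-k} : T_o^{n+2} ⟶ T_o^{n+1}`. -/
def codeg (To : Monad M) : (n k : ℕ) → (Tpow To (n + 2) ⟶ Tpow To (n + 1))
  | n, 0 =>
    { app := fun X => To.μ.app ((Tpow To n).obj X)
      naturality := fun _ _ f => To.μ.naturality ((Tpow To n).map f) }
  | 0, _ + 1 =>
    { app := fun X => To.μ.app X
      naturality := fun _ _ f => To.μ.naturality f }
  | n + 1, k + 1 => Functor.whiskerRight (codeg To n k) (To : M ⥤ M)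

/-- The iterated shuffle
`T_o^{n-1} t ∘ ⋯ ∘ T_o t T_o^{n-2} ∘ t T_o^{n-1} : T_i T_o^n X ⟶ T_o^n T_i X`
built from a distributive law `t : T_i T_o ⟶ T_o T_i`. -/
def shuffle (Ti To : Monad M) (d : DistLaw Ti To) :
    (n : ℕ) → (X : M) →
      ((Ti : M ⥤ M).obj ((Tpow To n).obj X) ⟶ (Tpow To n).obj ((Ti : M ⥤ M).obj X))
  | 0, _ => 𝟙 _
  | n + 1, X => d.hom.app ((Tpow To n).obj X) ≫ (To : M ⥤ M).map (shuffle Ti To d n X)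

theorem powShift (To : Monad M) (n : ℕ) (X : M) :
    (Tpow To n).obj ((To : M ⥤ M).obj X) = (Tpow To (n + 1)).obj X := by
  induction n with
  | zero => rfl
  | succ n ih => exact congrArg (To : M ⥤ M).obj ih

section

variable (To Ti : Monad M) (d : DistLaw Ti To) (P : M ⥤ D) (X : M)

/-- The cosimplex `Z^n := Π T_o^{n+1} X` associated to a monad `T_o`, an object `X` and
a functor `Π`. -/
def Zob (n : ℕ) : D := P.obj ((Tpow To (n + 1)).obj X)

/-- The coface `Π (T_o^k η_o T_o^{n+1-k} X) : Z^n ⟶ Z^{n+1}`. -/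
def dmor (n k : ℕ) : Zob To P X n ⟶ Zob To P X (n + 1) :=
  P.map ((coface To (n + 1) k).app X)

/-- The codegeneracy `Π (T_o^k μ_o T_o^{n-k} X) : Z^{n+1} ⟶ Z^n`. -/
def smor (n k : ℕ) : Zob To P X (n + 1) ⟶ Zob To P X n :=
  P.map ((codeg To n k).app X)

/-- The candidate para-cocyclic operator
`w_n = Π T_o^n w ∘ Π T_o^{n-1} t X ∘ ⋯ ∘ Π t T_o^{n-1} X ∘ i T_o^n X : Z^n ⟶ Z^n`. -/
def wmor (i : (To : M ⥤ M) ⋙ P ⟶ (Ti : M ⥤ M) ⋙ P)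
    (w : (Ti : M ⥤ M).obj X ⟶ (To : M ⥤ M).obj X) (n : ℕ) :
    Zob To P X n ⟶ Zob To P X n :=
  i.app ((Tpow To n).obj X) ≫ P.map (shuffle Ti To d n X) ≫
    P.map ((Tpow To n).map w) ≫ eqToHom (congrArg P.obj (powShift To n X))

end
attribute [reducible] Tpow
attribute [reducible] Zob
section AuxM
variable (To : Monad M)

lemma eqToHom_powShift_succ (n : ℕ) (X : M) :
    eqToHom (powShift To (n + 1) X) = (To : M ⥤ M).map (eqToHom (powShift To n X)) := by
  exact (eqToHom_map (To : M ⥤ M) (powShift To n X)).symm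

lemma coface_zero_app (n : ℕ) (X : M) :
    (coface To (n + 1) 0).app X = To.η.app ((Tpow To (n + 1)).obj X) := rfl

lemma coface_succ_app (n k : ℕ) (X : M) :
    (coface To (n + 1) (k + 1)).app X = (To : M ⥤ M).map ((coface To n k).app X) := rfl

lemma codeg_zero_app (n : ℕ) (X : M) :
    (codeg To n 0).app X = To.μ.app ((Tpow To n).obj X) := by cases n <;> rfl

lemma codeg_succ_app (n k : ℕ) (X : M) :
    (codeg To (n + 1) (k + 1)).app X = (To : M ⥤ M).map ((codeg To n k).app X) := rfl

end AuxM
section AuxM2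
variable (To : Monad M) (X : M)

lemma coface_zero_all (k : ℕ) : (coface To 0 k).app X = To.η.app X := rfl

lemma codeg_zero_all (k : ℕ) : (codeg To 0 k).app X = To.μ.app X := by cases k <;> rfl

lemma cf_cf : ∀ n j k : ℕ, j ≤ k → k ≤ n →
    (coface To n j).app X ≫ (coface To (n + 1) (k + 1)).app X =
      (coface To n k).app X ≫ (coface To (n + 1) j).app X
  | 0, 0, k, _, hk => by
      rw [coface_zero_all, coface_zero_all, coface_succ_app, coface_zero_all,
        coface_zero_app]
      exact (To.η.naturality (To.η.app X)).symm
  | n + 1, 0, k, _, hk => by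
      rw [coface_zero_app, coface_succ_app, coface_zero_app]
      exact (To.η.naturality ((coface To (n + 1) k).app X)).symm
  | n + 1, j + 1, k + 1, hj, hk => by
      have := congrArg (To : M ⥤ M).map (cf_cf n j k (by omega) (by omega))
      simpa only [coface_succ_app, CategoryTheory.Functor.map_comp] using this
  | 0, j + 1, k, hj, hk => absurd (hj.trans hk) (by omega)
  | _ + 1, j + 1, 0, hj, _ => absurd hj (by omega)

lemma cd_cd : ∀ n j k : ℕ, j ≤ k → k ≤ n →
    (codeg To (n + 1) j).app X ≫ (codeg To n k).app X =
      (codeg To (n + 1) (k + 1)).app X ≫ (codeg To n j).app X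
  | n, 0, 0, _, _ => by
      rw [codeg_zero_app, codeg_zero_app, codeg_succ_app, codeg_zero_app]
      exact (To.assoc ((Tpow To n).obj X)).symm
  | n + 1, 0, k + 1, _, hk => by
      rw [codeg_zero_app, codeg_succ_app, codeg_succ_app, codeg_succ_app, codeg_zero_app]
      exact (To.μ.naturality ((codeg To n k).app X)).symm
  | n + 1, j + 1, k + 1, hj, hk => by
      have := congrArg (To : M ⥤ M).map (cd_cd n j k (by omega) (by omega))
      simpa only [codeg_succ_app, CategoryTheory.Functor.map_comp] using this
  | 0, j + 1, k, hj, hk => absurd (hj.trans hk) (by omega)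
  | 0, 0, k + 1, _, hk => absurd hk (by omega)

lemma cf_cd : ∀ n j k : ℕ, j ≤ k → k ≤ n →
    (coface To (n + 2) j).app X ≫ (codeg To (n + 1) (k + 1)).app X =
      (codeg To n k).app X ≫ (coface To (n + 1) j).app X
  | n, 0, k, _, hk => by
      rw [coface_zero_app, codeg_succ_app, coface_zero_app]
      exact (To.η.naturality ((codeg To n k).app X)).symm
  | n + 1, j + 1, k + 1, hj, hk => by
      have := congrArg (To : M ⥤ M).map (cf_cd n j k (by omega) (by omega))
      simpa only [coface_succ_app, codeg_succ_app, CategoryTheory.Functor.map_comp] using this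
  | n, j + 1, 0, hj, _ => absurd hj (by omega)
  | 0, j + 1, k + 1, hj, hk => absurd hk (by omega)

lemma cf_cd_gt : ∀ n j k : ℕ, k ≤ j → j ≤ n →
    (coface To (n + 2) (j + 2)).app X ≫ (codeg To (n + 1) k).app X =
      (codeg To n k).app X ≫ (coface To (n + 1) (j + 1)).app X
  | n, j, 0, _, hj => by
      rw [codeg_zero_app, codeg_zero_app, coface_succ_app, coface_succ_app]
      exact To.μ.naturality ((coface To n j).app X)
  | n + 1, j + 1, k + 1, hk, hj => by
      have := congrArg (To : M ⥤ M).map (cf_cd_gt n j k (by omega) (by omega))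
      simpa only [coface_succ_app, codeg_succ_app, CategoryTheory.Functor.map_comp] using this
  | n, 0, k + 1, hk, _ => absurd hk (by omega)
  | 0, j + 1, k + 1, _, hj => absurd hj (by omega)

lemma cf_cd_eq1 : ∀ n k : ℕ,
    (coface To (n + 1) k).app X ≫ (codeg To n k).app X = 𝟙 _
  | 0, 0 => To.left_unit X
  | 0, k + 1 => by
      rw [coface_succ_app, coface_zero_all, codeg_zero_all]
      exact To.right_unit X
  | n + 1, 0 => To.left_unit ((Tpow To (n + 1)).obj X)
  | n + 1, k + 1 => by
      rw [coface_succ_app, codeg_succ_app, ← CategoryTheory.Functor.map_comp,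
        cf_cd_eq1 n k]
      exact CategoryTheory.Functor.map_id _ _

lemma cf_cd_eq2 : ∀ n k : ℕ,
    (coface To (n + 1) (k + 1)).app X ≫ (codeg To n k).app X = 𝟙 _
  | 0, k => by
      rw [coface_succ_app, coface_zero_all, codeg_zero_all]
      exact To.right_unit X
  | n + 1, 0 => by
      rw [coface_succ_app, coface_zero_app, codeg_zero_app]
      exact To.right_unit ((Tpow To (n + 1)).obj X)
  | n + 1, k + 1 => by
      rw [coface_succ_app, codeg_succ_app, ← CategoryTheory.Functor.map_comp,
        cf_cd_eq2 n k]
      exact CategoryTheory.Functor.map_id _ _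

end AuxM2
section AuxM3
variable (To : Monad M) (X : M)

lemma cf_shift : ∀ n k : ℕ, k ≤ n →
    (coface To n k).app ((To : M ⥤ M).obj X) ≫ eqToHom (powShift To (n + 1) X) =
      eqToHom (powShift To n X) ≫ (coface To (n + 1) k).app X
  | 0, 0, _ => by
      rw [coface_zero_all, coface_zero_app]
      have h0 : eqToHom (powShift To 0 X) = 𝟙 _ := rfl
      have h1 : eqToHom (powShift To 1 X) = 𝟙 _ := rfl
      rw [h0, h1, Category.comp_id, Category.id_comp]
      rfl
  | n + 1, 0, _ => by
      rw [coface_zero_app, coface_zero_app, eqToHom_powShift_succ]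
      exact (To.η.naturality (eqToHom (powShift To (n + 1) X))).symm
  | n + 1, k + 1, hk => by
      have := congrArg (To : M ⥤ M).map (cf_shift n k (by omega))
      simpa only [coface_succ_app, CategoryTheory.Functor.map_comp,
        eqToHom_powShift_succ] using this
  | 0, k + 1, hk => absurd hk (by omega)

lemma cd_shift : ∀ n k : ℕ, k ≤ n →
    (codeg To n k).app ((To : M ⥤ M).obj X) ≫ eqToHom (powShift To (n + 1) X) =
      eqToHom (powShift To (n + 2) X) ≫ (codeg To (n + 1) k).app X
  | n, 0, _ => by
      rw [codeg_zero_app, codeg_zero_app, eqToHom_powShift_succ, eqToHom_powShift_succ,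
        eqToHom_powShift_succ]
      exact (To.μ.naturality (eqToHom (powShift To n X))).symm
  | n + 1, k + 1, hk => by
      have := congrArg (To : M ⥤ M).map (cd_shift n k (by omega))
      simpa only [codeg_succ_app, CategoryTheory.Functor.map_comp,
        eqToHom_powShift_succ] using this
  | 0, k + 1, hk => absurd hk (by omega)

/-- `coface n n` is the innermost unit, up to the power-shift identification. -/
lemma cf_max : ∀ n : ℕ, (coface To n n).app X =
    (Tpow To n).map (To.η.app X) ≫ eqToHom (powShift To n X)
  | 0 => by
      rw [coface_zero_all]
      have h0 : eqToHom (powShift To 0 X) = 𝟙 _ := rfl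
      rw [h0, Category.comp_id]
      rfl
  | n + 1 => by
      have := congrArg (To : M ⥤ M).map (cf_max n)
      simp only [CategoryTheory.Functor.map_comp] at this
      rw [coface_succ_app, eqToHom_powShift_succ]
      exact this

end AuxM3
section AuxM4
variable (Ti To : Monad M) (d : DistLaw Ti To) (X : M)

lemma shuffle_zero : shuffle Ti To d 0 X = 𝟙 _ := rfl

lemma shuffle_succ (n : ℕ) : shuffle Ti To d (n + 1) X =
    d.hom.app ((Tpow To n).obj X) ≫ (To : M ⥤ M).map (shuffle Ti To d n X) := rfl

lemma S1 : ∀ n k : ℕ, k ≤ n →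
    (Ti : M ⥤ M).map ((coface To n k).app X) ≫ shuffle Ti To d (n + 1) X =
      shuffle Ti To d n X ≫ (coface To n k).app ((Ti : M ⥤ M).obj X)
  | 0, 0, _ => by
      have hu : (Ti : M ⥤ M).map (To.η.app X) ≫ d.hom.app ((Tpow To 0).obj X) =
          To.η.app ((Ti : M ⥤ M).obj X) := d.unit_right X
      rw [shuffle_succ, shuffle_zero, coface_zero_all, coface_zero_all,
        CategoryTheory.Functor.map_id, Category.id_comp, ← Category.assoc, hu]
      exact Category.comp_id _
  | n + 1, 0, _ => by
      rw [coface_zero_app, coface_zero_app, shuffle_succ, ← Category.assoc]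
      have hu : (Ti : M ⥤ M).map (To.η.app ((Tpow To (n + 1)).obj X)) ≫
          d.hom.app ((Tpow To (n + 1)).obj X) =
          To.η.app ((Ti : M ⥤ M).obj ((Tpow To (n + 1)).obj X)) :=
        d.unit_right ((Tpow To (n + 1)).obj X)
      rw [hu]
      exact (To.η.naturality (shuffle Ti To d (n + 1) X)).symm
  | n + 1, k + 1, hk => by
      have hn : (Ti : M ⥤ M).map ((To : M ⥤ M).map ((coface To n k).app X)) ≫
          d.hom.app ((Tpow To (n + 1)).obj X) =
          d.hom.app ((Tpow To n).obj X) ≫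
            (To : M ⥤ M).map ((Ti : M ⥤ M).map ((coface To n k).app X)) :=
        d.hom.naturality ((coface To n k).app X)
      rw [coface_succ_app, coface_succ_app, shuffle_succ Ti To d X (n + 1),
        ← Category.assoc, hn, Category.assoc, ← CategoryTheory.Functor.map_comp,
        S1 n k (by omega), CategoryTheory.Functor.map_comp, shuffle_succ Ti To d X n]
      simp only [Category.assoc]
  | 0, k + 1, hk => absurd hk (by omega)

lemma S2 : ∀ n k : ℕ,
    (Ti : M ⥤ M).map ((codeg To n k).app X) ≫ shuffle Ti To d (n + 1) X =
      shuffle Ti To d (n + 2) X ≫ (codeg To n k).app ((Ti : M ⥤ M).obj X)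
  | n, 0 => by
      rw [codeg_zero_app, codeg_zero_app, shuffle_succ, shuffle_succ, shuffle_succ,
        ← Category.assoc]
      have hm : (Ti : M ⥤ M).map (To.μ.app ((Tpow To n).obj X)) ≫
          d.hom.app ((Tpow To n).obj X) =
          d.hom.app ((Tpow To (n + 1)).obj X) ≫
            (To : M ⥤ M).map (d.hom.app ((Tpow To n).obj X)) ≫
            To.μ.app ((Ti : M ⥤ M).obj ((Tpow To n).obj X)) :=
        d.mul_right ((Tpow To n).obj X)
      rw [hm]
      have hμ : To.μ.app ((Ti : M ⥤ M).obj ((Tpow To n).obj X)) ≫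
          (To : M ⥤ M).map (shuffle Ti To d n X) =
          (To : M ⥤ M).map ((To : M ⥤ M).map (shuffle Ti To d n X)) ≫
            To.μ.app ((Tpow To n).obj ((Ti : M ⥤ M).obj X)) :=
        (To.μ.naturality (shuffle Ti To d n X)).symm
      simp only [Category.assoc, hμ, CategoryTheory.Functor.map_comp]
  | 0, k + 1 => by
      have h := S2 0 0
      have e1 : (codeg To 0 (k + 1)).app X = (codeg To 0 0).app X := rfl
      have e2 : (codeg To 0 (k + 1)).app ((Ti : M ⥤ M).obj X) =
          (codeg To 0 0).app ((Ti : M ⥤ M).obj X) := rfl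
      rw [e1, e2]; exact h
  | n + 1, k + 1 => by
      have hn : (Ti : M ⥤ M).map ((To : M ⥤ M).map ((codeg To n k).app X)) ≫
          d.hom.app ((Tpow To (n + 1)).obj X) =
          d.hom.app ((Tpow To (n + 2)).obj X) ≫
            (To : M ⥤ M).map ((Ti : M ⥤ M).map ((codeg To n k).app X)) :=
        d.hom.naturality ((codeg To n k).app X)
      rw [codeg_succ_app, codeg_succ_app, shuffle_succ Ti To d X (n + 1),
        ← Category.assoc, hn, Category.assoc, ← CategoryTheory.Functor.map_comp,
        S2 n k, CategoryTheory.Functor.map_comp, shuffle_succ Ti To d X (n + 2)]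
      simp only [Category.assoc]

lemma S3 : ∀ n : ℕ,
    Ti.η.app ((Tpow To n).obj X) ≫ shuffle Ti To d n X =
      (Tpow To n).map (Ti.η.app X)
  | 0 => by
      rw [shuffle_zero, Category.comp_id]; rfl
  | n + 1 => by
      rw [shuffle_succ, ← Category.assoc]
      have hu : Ti.η.app ((Tpow To (n + 1)).obj X) ≫ d.hom.app ((Tpow To n).obj X) =
          (To : M ⥤ M).map (Ti.η.app ((Tpow To n).obj X)) :=
        d.unit_left ((Tpow To n).obj X)
      rw [hu, ← CategoryTheory.Functor.map_comp, S3 n]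
      rfl

end AuxM4
section AuxU
variable (Ti To : Monad M) (d : DistLaw Ti To) (X : M)
  (w : (Ti : M ⥤ M).obj X ⟶ (To : M ⥤ M).obj X)

/-- The morphism `T_o^n w ∘ (shuffle) : T_i T_o^n X ⟶ T_o^{n+1} X`. -/
def uaux (n : ℕ) :
    (Ti : M ⥤ M).obj ((Tpow To n).obj X) ⟶ (Tpow To (n + 1)).obj X :=
  shuffle Ti To d n X ≫ (Tpow To n).map w ≫ eqToHom (powShift To n X)

lemma uaux_zero : uaux Ti To d X w 0 = w := by
  show shuffle Ti To d 0 X ≫ (Tpow To 0).map w ≫ eqToHom (powShift To 0 X) = w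
  have h0 : eqToHom (powShift To 0 X) = 𝟙 ((Tpow To 1).obj X) := rfl
  rw [shuffle_zero, h0, Category.id_comp]
  show w ≫ 𝟙 _ = w
  exact Category.comp_id w

lemma u_succ (n : ℕ) : uaux Ti To d X w (n + 1) =
    d.hom.app ((Tpow To n).obj X) ≫ (To : M ⥤ M).map (uaux Ti To d X w n) := by
  show shuffle Ti To d (n + 1) X ≫ (Tpow To (n + 1)).map w ≫
      eqToHom (powShift To (n + 1) X) = _
  rw [shuffle_succ, eqToHom_powShift_succ]
  show _ = d.hom.app ((Tpow To n).obj X) ≫ (To : M ⥤ M).map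
      (shuffle Ti To d n X ≫ (Tpow To n).map w ≫ eqToHom (powShift To n X))
  rw [CategoryTheory.Functor.map_comp, CategoryTheory.Functor.map_comp, Category.assoc]
  rfl

lemma L6 (n k : ℕ) (hk : k ≤ n) :
    (Ti : M ⥤ M).map ((coface To n k).app X) ≫ uaux Ti To d X w (n + 1) =
      uaux Ti To d X w n ≫ (coface To (n + 1) k).app X := by
  unfold uaux
  slice_lhs 1 2 => rw [S1 Ti To d X n k hk]
  rw [Category.assoc, Category.assoc]
  slice_lhs 2 3 => rw [← (coface To n k).naturality w]
  slice_lhs 3 4 => rw [cf_shift To X n k hk]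
  simp only [Category.assoc]

lemma L7 (hw_unit : Ti.η.app X ≫ w = To.η.app X) (n : ℕ) :
    Ti.η.app ((Tpow To n).obj X) ≫ uaux Ti To d X w n = (coface To n n).app X := by
  unfold uaux
  rw [← Category.assoc, S3 Ti To d X n, ← Category.assoc,
    ← CategoryTheory.Functor.map_comp, hw_unit, cf_max]

lemma L8 (n k : ℕ) (hk : k ≤ n) :
    (Ti : M ⥤ M).map ((codeg To n k).app X) ≫ uaux Ti To d X w (n + 1) =
      uaux Ti To d X w (n + 2) ≫ (codeg To (n + 1) k).app X := by
  unfold uaux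
  slice_lhs 1 2 => rw [S2 Ti To d X n k]
  rw [Category.assoc, Category.assoc]
  slice_lhs 2 3 => rw [← (codeg To n k).naturality w]
  slice_lhs 3 4 => rw [cd_shift To X n k hk]
  simp only [Category.assoc]

lemma L9 (hw_mul : Ti.μ.app X ≫ w =
      (Ti : M ⥤ M).map w ≫ d.hom.app X ≫ (To : M ⥤ M).map w ≫ To.μ.app X) :
    ∀ n : ℕ, Ti.μ.app ((Tpow To n).obj X) ≫ uaux Ti To d X w n =
      (Ti : M ⥤ M).map (uaux Ti To d X w n) ≫ uaux Ti To d X w (n + 1) ≫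
        (codeg To n n).app X
  | 0 => by
      rw [uaux_zero, u_succ, uaux_zero, codeg_zero_app]
      simp only [Category.assoc]
      exact hw_mul
  | n + 1 => by
      have ih := L9 hw_mul n
      rw [u_succ Ti To d X w n] at ih
      have ml : Ti.μ.app ((Tpow To (n + 1)).obj X) ≫ d.hom.app ((Tpow To n).obj X) =
          (Ti : M ⥤ M).map (d.hom.app ((Tpow To n).obj X)) ≫
            d.hom.app ((Ti : M ⥤ M).obj ((Tpow To n).obj X)) ≫
            (To : M ⥤ M).map (Ti.μ.app ((Tpow To n).obj X)) :=
        d.mul_left ((Tpow To n).obj X)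
      have hn : d.hom.app ((Ti : M ⥤ M).obj ((Tpow To n).obj X)) ≫
          (To : M ⥤ M).map ((Ti : M ⥤ M).map (uaux Ti To d X w n)) =
          (Ti : M ⥤ M).map ((To : M ⥤ M).map (uaux Ti To d X w n)) ≫
            d.hom.app ((Tpow To (n + 1)).obj X) :=
        (d.hom.naturality (uaux Ti To d X w n)).symm
      rw [u_succ Ti To d X w (n + 1), u_succ Ti To d X w n, codeg_succ_app]
      slice_lhs 1 2 => rw [ml]
      slice_lhs 3 4 => rw [← CategoryTheory.Functor.map_comp, ih]
      simp only [CategoryTheory.Functor.map_comp, Category.assoc]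
      slice_lhs 2 3 => rw [hn]
      simp only [Category.assoc]

end AuxU
section AuxW
variable (To Ti : Monad M) (d : DistLaw Ti To) (P : M ⥤ D) (X : M)
  (i : (To : M ⥤ M) ⋙ P ⟶ (Ti : M ⥤ M) ⋙ P)
  (w : (Ti : M ⥤ M).obj X ⟶ (To : M ⥤ M).obj X)

lemma wmor_eq (n : ℕ) : wmor To Ti d P X i w n =
    i.app ((Tpow To n).obj X) ≫ P.map (uaux Ti To d X w n) := by
  unfold wmor uaux
  rw [CategoryTheory.Functor.map_comp, CategoryTheory.Functor.map_comp, eqToHom_map]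

end AuxW

/-- Let `(M, C, T_o, T_i, Π, t, i)` be an admissible septuple (so
`T_o`, `T_i` are monads on `M`, `Π : M ⥤ C` is a functor, `t : T_i T_o ⟶ T_o T_i` is a
distributive law, and `i : Π T_o ⟶ Π T_i` is a natural transformation satisfying
`i ∘ Π η_o = Π η_i` and `i ∘ Π μ_o = Π μ_i ∘ i T_i ∘ Π t ∘ i T_o`), and let `(X, w)` be
a transposition morphism (`w ∘ η_i X = η_o X` and
`w ∘ μ_i X = μ_o X ∘ T_o w ∘ t X ∘ T_i w`).  Then the cosimplex `Z^n := Π T_o^{n+1} X`,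
with cofaces `Π (T_o^k η_o T_o^{n+1-k} X)` and codegeneracies
`Π (T_o^k μ_o T_o^{n-k} X)`, is para-cocyclic with para-cocyclic operator
`w_n := Π T_o^n w ∘ Π T_o^{n-1} t X ∘ ⋯ ∘ Π t T_o^{n-1} X ∘ i T_o^n X`: the cosimplicial
identities hold and the operators `w_n` satisfy the para-cocyclic compatibility
relations with the cofaces and the codegeneracies. -/
theorem stmt19 (To Ti : Monad M) (d : DistLaw Ti To) (P : M ⥤ D)
    (i : (To : M ⥤ M) ⋙ P ⟶ (Ti : M ⥤ M) ⋙ P)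
    (hi_unit : ∀ Y : M, P.map (To.η.app Y) ≫ i.app Y = P.map (Ti.η.app Y))
    (hi_mul : ∀ Y : M,
      P.map (To.μ.app Y) ≫ i.app Y =
        i.app ((To : M ⥤ M).obj Y) ≫ P.map (d.hom.app Y) ≫
          i.app ((Ti : M ⥤ M).obj Y) ≫ P.map (Ti.μ.app Y))
    (X : M) (w : (Ti : M ⥤ M).obj X ⟶ (To : M ⥤ M).obj X)
    (hw_unit : Ti.η.app X ≫ w = To.η.app X)
    (hw_mul : Ti.μ.app X ≫ w =
      (Ti : M ⥤ M).map w ≫ d.hom.app X ≫ (To : M ⥤ M).map w ≫ To.μ.app X) :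
    -- cosimplicial identities
    (∀ n j k : ℕ, j < k → k ≤ n + 2 →
      dmor To P X n j ≫ dmor To P X (n + 1) k =
        dmor To P X n (k - 1) ≫ dmor To P X (n + 1) j) ∧
    (∀ n j k : ℕ, j ≤ k → k ≤ n →
      smor To P X (n + 1) j ≫ smor To P X n k =
        smor To P X (n + 1) (k + 1) ≫ smor To P X n j) ∧
    (∀ n j k : ℕ, j < k → k ≤ n + 1 →
      dmor To P X (n + 1) j ≫ smor To P X (n + 1) k =
        smor To P X n (k - 1) ≫ dmor To P X n j) ∧
    (∀ n k : ℕ, k ≤ n + 1 →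
      dmor To P X (n + 1) k ≫ smor To P X (n + 1) k = 𝟙 _ ∧
      dmor To P X (n + 1) (k + 1) ≫ smor To P X (n + 1) k = 𝟙 _) ∧
    (∀ n j k : ℕ, k + 1 < j → j ≤ n + 2 →
      dmor To P X (n + 1) j ≫ smor To P X (n + 1) k =
        smor To P X n k ≫ dmor To P X n (j - 1)) ∧
    -- para-cocyclic compatibility with the cofaces
    (∀ n j : ℕ, 1 ≤ j → j ≤ n + 1 →
      dmor To P X n j ≫ wmor To Ti d P X i w (n + 1) =
        wmor To Ti d P X i w n ≫ dmor To P X n (j - 1)) ∧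
    (∀ n : ℕ,
      dmor To P X n 0 ≫ wmor To Ti d P X i w (n + 1) = dmor To P X n (n + 1)) ∧
    -- para-cocyclic compatibility with the codegeneracies
    (∀ n j : ℕ, 1 ≤ j → j ≤ n →
      smor To P X n j ≫ wmor To Ti d P X i w n =
        wmor To Ti d P X i w (n + 1) ≫ smor To P X n (j - 1)) ∧
    (∀ n : ℕ,
      smor To P X n 0 ≫ wmor To Ti d P X i w n =
        wmor To Ti d P X i w (n + 1) ≫ wmor To Ti d P X i w (n + 1) ≫
          smor To P X n n) := by
  refine ⟨?_, ?_, ?_, ?_, ?_, ?_, ?_, ?_, ?_⟩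
  · -- d-d
    intro n j k hj hk
    obtain ⟨k', rfl⟩ : ∃ k', k = k' + 1 := ⟨k - 1, by omega⟩
    simp only [dmor, Nat.add_sub_cancel]
    rw [← P.map_comp, ← P.map_comp, cf_cf To X (n + 1) j k' (by omega) (by omega)]
  · -- s-s
    intro n j k hj hk
    simp only [smor]
    rw [← P.map_comp, ← P.map_comp, cd_cd To X n j k hj hk]
  · -- d-s mixed
    intro n j k hj hk
    obtain ⟨k', rfl⟩ : ∃ k', k = k' + 1 := ⟨k - 1, by omega⟩
    simp only [dmor, smor, Nat.add_sub_cancel]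
    rw [← P.map_comp, ← P.map_comp, cf_cd To X n j k' (by omega) (by omega)]
  · -- d-s equal
    intro n k _
    constructor
    · rw [dmor, smor, ← P.map_comp, cf_cd_eq1 To X (n + 1) k]
      exact P.map_id _
    · rw [dmor, smor, ← P.map_comp, cf_cd_eq2 To X (n + 1) k]
      exact P.map_id _
  · -- d-s far
    intro n j k hj hk
    obtain ⟨j', rfl⟩ : ∃ j', j = j' + 2 := ⟨j - 2, by omega⟩
    have h1 : j' + 2 - 1 = j' + 1 := rfl
    simp only [dmor, smor, h1]
    rw [← P.map_comp, ← P.map_comp, cf_cd_gt To X n j' k (by omega) (by omega)]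
  · -- w vs cofaces, inner
    intro n j h1 hn
    obtain ⟨j', rfl⟩ : ∃ j', j = j' + 1 := ⟨j - 1, by omega⟩
    rw [wmor_eq, wmor_eq]
    simp only [dmor, Nat.add_sub_cancel]
    rw [coface_succ_app]
    have hnat : P.map ((To : M ⥤ M).map ((coface To n j').app X)) ≫
        i.app ((Tpow To (n + 1)).obj X) =
        i.app ((Tpow To n).obj X) ≫
          P.map ((Ti : M ⥤ M).map ((coface To n j').app X)) :=
      i.naturality ((coface To n j').app X)
    rw [← Category.assoc, hnat, Category.assoc, ← P.map_comp,
      L6 Ti To d X w n j' (by omega), P.map_comp, Category.assoc]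
  · -- w vs coface 0
    intro n
    rw [wmor_eq]
    simp only [dmor]
    rw [coface_zero_app, ← Category.assoc, hi_unit ((Tpow To (n + 1)).obj X),
      ← P.map_comp, L7 Ti To d X w hw_unit (n + 1)]
  · -- w vs codegeneracies, inner
    intro n j h1 hn
    obtain ⟨j', rfl⟩ : ∃ j', j = j' + 1 := ⟨j - 1, by omega⟩
    obtain ⟨m, rfl⟩ : ∃ m, n = m + 1 := ⟨n - 1, by omega⟩
    rw [wmor_eq, wmor_eq]
    simp only [smor, Nat.add_sub_cancel]
    rw [codeg_succ_app]
    have hnat : P.map ((To : M ⥤ M).map ((codeg To m j').app X)) ≫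
        i.app ((Tpow To (m + 1)).obj X) =
        i.app ((Tpow To (m + 2)).obj X) ≫
          P.map ((Ti : M ⥤ M).map ((codeg To m j').app X)) :=
      i.naturality ((codeg To m j').app X)
    rw [← Category.assoc, hnat, Category.assoc, ← P.map_comp,
      L8 Ti To d X w m j' (by omega), P.map_comp, Category.assoc]
  · -- w vs codegeneracy 0 : para-cocyclic relation
    intro n
    rw [wmor_eq, wmor_eq]
    simp only [smor]
    rw [codeg_zero_app]
    have hm : P.map (To.μ.app ((Tpow To n).obj X)) ≫ i.app ((Tpow To n).obj X) =
        i.app ((Tpow To (n + 1)).obj X) ≫ P.map (d.hom.app ((Tpow To n).obj X)) ≫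
          i.app ((Ti : M ⥤ M).obj ((Tpow To n).obj X)) ≫
          P.map (Ti.μ.app ((Tpow To n).obj X)) :=
      hi_mul ((Tpow To n).obj X)
    rw [← Category.assoc, hm]
    have h9 := L9 Ti To d X w hw_mul n
    rw [u_succ Ti To d X w n] at h9
    have hnat : P.map ((To : M ⥤ M).map (uaux Ti To d X w n)) ≫
        i.app ((Tpow To (n + 1)).obj X) =
        i.app ((Ti : M ⥤ M).obj ((Tpow To n).obj X)) ≫
          P.map ((Ti : M ⥤ M).map (uaux Ti To d X w n)) :=
      i.naturality (uaux Ti To d X w n)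
    slice_lhs 4 5 => rw [← P.map_comp, h9]
    conv_rhs => rw [u_succ Ti To d X w n]
    simp only [CategoryTheory.Functor.map_comp, Category.assoc]
    rw [← reassoc_of% hnat]
    rfl
end
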